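/- If (1 − x)/x = c₂(y − 1)/(c₁ y), then for every K₀ ∈ 𝔨, P₁ ∈ 𝔭₁ and P₂ ∈ 𝔭₂ the element Z = ((1 − x)/x) K₀ satisfies ⁅Z, K₀⁆ = 0, ⁅f₁(Z), P₁⁆ = ((1 − x)/x) ⁅f₁(K₀), P₁⁆ and ⁅f₂(Z), P₂⁆ = (c₂(y − 1)/(c₁ y)) ⁅f₂(K₀), P₂⁆; in particular, (x, y) satisfies the GO condition. -/

import Mathlib

/-- If `(1 − x)/x = c₂(y − 1)/(c₁ y)`, then for every `K₀ ∈ 𝔨`,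
`P₁ ∈ 𝔭₁`, `P₂ ∈ 𝔭₂` the element `Z = ((1 − x)/x)·K₀` satisfies `⁅Z, K₀⁆ = 0`,
`⁅f₁ Z, P₁⁆ = ((1 − x)/x)·⁅f₁ K₀, P₁⁆` and `⁅f₂ Z, P₂⁆ = (c₂(y − 1)/(c₁ y))·⁅f₂ K₀, P₂⁆`;
in particular `(x, y)` satisfies the GO condition (stated via the parametrization
`X = (f₁ K₀ + P₁, −(c₂/c₁)·f₂ K₀ + P₂)` of `𝔪`, componentwise brackets, and
membership of a pair in `𝔥` meaning it equals `(f₁ W, f₂ W)` for some `W ∈ 𝔨`). -/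
theorem statement3
    {k g1 g2 : Type*}
    [LieRing k] [LieAlgebra ℝ k] [Module.Finite ℝ k] [LieAlgebra.IsSemisimple ℝ k]
    [LieRing g1] [LieAlgebra ℝ g1] [Module.Finite ℝ g1] [LieAlgebra.IsSemisimple ℝ g1]
    [LieRing g2] [LieAlgebra ℝ g2] [Module.Finite ℝ g2] [LieAlgebra.IsSemisimple ℝ g2]
    (f1 : k →ₗ⁅ℝ⁆ g1) (f2 : k →ₗ⁅ℝ⁆ g2)
    (hf1 : Function.Injective f1) (hf2 : Function.Injective f2)
    (c1 c2 : ℝ) (hc1 : 0 < c1) (hc2 : 0 < c2)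
    (hB1 : ∀ Z W : k, killingForm ℝ k Z W = c1 * killingForm ℝ g1 (f1 Z) (f1 W))
    (hB2 : ∀ Z W : k, killingForm ℝ k Z W = c2 * killingForm ℝ g2 (f2 Z) (f2 W))
    (p1 : Submodule ℝ g1) (hp1 : ∀ P : g1, P ∈ p1 ↔ ∀ Z : k, killingForm ℝ g1 P (f1 Z) = 0)
    (p2 : Submodule ℝ g2) (hp2 : ∀ P : g2, P ∈ p2 ↔ ∀ Z : k, killingForm ℝ g2 P (f2 Z) = 0)
    (hsum1 : ∀ a : g1, ∃ Z : k, a - f1 Z ∈ p1)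
    (hsum2 : ∀ a : g2, ∃ Z : k, a - f2 Z ∈ p2)
    (hint1 : ∀ Z : k, f1 Z ∈ p1 → Z = 0)
    (hint2 : ∀ Z : k, f2 Z ∈ p2 → Z = 0)
    (hlie1 : ∀ Z : k, ∀ P ∈ p1, ⁅f1 Z, P⁆ ∈ p1)
    (hlie2 : ∀ Z : k, ∀ P ∈ p2, ⁅f2 Z, P⁆ ∈ p2)
    (x y : ℝ) (hx : 0 < x) (hy : 0 < y)
    (h : (1 - x) / x = c2 * (y - 1) / (c1 * y)) :
    (∀ (K0 : k), ∀ P1 ∈ p1, ∀ P2 ∈ p2,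
        ⁅((1 - x) / x) • K0, K0⁆ = 0 ∧
        ⁅f1 (((1 - x) / x) • K0), P1⁆ = ((1 - x) / x) • ⁅f1 K0, P1⁆ ∧
        ⁅f2 (((1 - x) / x) • K0), P2⁆ = (c2 * (y - 1) / (c1 * y)) • ⁅f2 K0, P2⁆) ∧
    (∀ (K0 : k), ∀ P1 ∈ p1, ∀ P2 ∈ p2, ∃ Z W : k,
        ⁅f1 Z + (f1 K0 + P1), f1 K0 + x • P1⁆ = f1 W ∧
        ⁅f2 Z + (-(c2 / c1) • f2 K0 + P2), -(c2 / c1) • f2 K0 + y • P2⁆ = f2 W) := by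
  have hx' : x ≠ 0 := ne_of_gt hx
  have hy' : y ≠ 0 := ne_of_gt hy
  have hc1' : c1 ≠ 0 := ne_of_gt hc1
  constructor
  · intro K0 P1 _ P2 _
    refine ⟨by simp, ?_, ?_⟩
    · rw [map_smul, smul_lie]
    · rw [map_smul, smul_lie, h]
  · intro K0 P1 _ P2 _
    refine ⟨((1 - x) / x) • K0, 0, ?_, ?_⟩
    · rw [map_smul, map_zero]
      simp only [add_lie, lie_add, smul_lie, lie_smul, lie_self, smul_zero, zero_add,
        add_zero, smul_smul, lie_smul]
      rw [← lie_skew (f1 K0) P1]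
      match_scalars <;> field_simp <;> ring
    · rw [map_smul, map_zero, h]
      simp only [add_lie, lie_add, smul_lie, lie_smul, lie_self, smul_zero, zero_add,
        add_zero, smul_smul, neg_smul, neg_lie, lie_neg, neg_neg]
      rw [← lie_skew (f2 K0) P2]
      match_scalars <;> field_simp <;> ring
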